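/- Fix r ≥ 2 and let n = w(r−1)+1 with w ≥ 1. Let σ = M_r^{w−1}(1^n) be the result of applying w−1 r-merge operations to the all-ones sequence of length n; σ has length r. Writing the unique decomposition n = s·r^{p−1} + (r−s)·r^p + b (with p ≥ 1, 1 ≤ s ≤ r, 0 ≤ b < r^p − r^{p−1}), the multiset of elements of σ consists of exactly s−1 copies of r^{p−1}, one element equal to r^{p−1} + b, and r−s copies of r^p. -/
import Mathlib


attribute [local instance] Classical.propDecidable

/-- The r-merge operator: delete the first `r` elements of a non-decreasing
sequence and insert their sum in the appropriate position. -/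
def rMerge (r : ℕ) (σ : List ℕ) : List ℕ :=
  List.orderedInsert (· ≤ ·) ((σ.take r).sum) (σ.drop r)

/-- `x` is a power of `r` (with `1 = r^0` counted as a power of `r`). -/
def IsPowerOf (r x : ℕ) : Prop := ∃ j : ℕ, x = r ^ j

/-- A finite non-decreasing sequence of positive integers is *normal* if for
some `k ≥ 0` all its elements lie in `[r^k, r^(k+1)]` and at most one element
is not a power of `r`. -/
def IsNormalSeq (r : ℕ) (σ : List ℕ) : Prop :=
  ∃ k : ℕ, (∀ x ∈ σ, r ^ k ≤ x ∧ x ≤ r ^ (k + 1)) ∧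
    (σ.countP (fun x => decide (¬ IsPowerOf r x))) ≤ 1

namespace RMA

lemma oi_le {x y : ℕ} (h : x ≤ y) (D : ℕ) :
    List.orderedInsert (· ≤ ·) x (List.replicate D y) = x :: List.replicate D y := by
  cases D with
  | zero => simp [List.orderedInsert]
  | succ n => simp [List.replicate_succ, List.orderedInsert, h]

lemma oi_gt {x y : ℕ} (h : y < x) (D : ℕ) :
    List.orderedInsert (· ≤ ·) x (List.replicate D y) = List.replicate D y ++ [x] := by
  induction D with
  | zero => simp [List.orderedInsert]
  | succ n ih => simp [List.replicate_succ, List.orderedInsert, Nat.not_le.mpr h, ih]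

lemma oi_append {x : ℕ} {l₁ l₂ : List ℕ} (h : ∀ z ∈ l₁, z < x) :
    List.orderedInsert (· ≤ ·) x (l₁ ++ l₂) = l₁ ++ List.orderedInsert (· ≤ ·) x l₂ := by
  induction l₁ with
  | nil => rfl
  | cons hd tl ih =>
      simp [List.orderedInsert, Nat.not_le.mpr (h hd (by simp)),
        ih (fun z hz => h z (by simp [hz]))]

def mseq (r k a c d : ℕ) : List ℕ :=
  List.replicate a (r ^ k) ++ (r ^ k + c) :: List.replicate d (r ^ (k + 1))

lemma step (r : ℕ) (hr : 2 ≤ r) (k a c d : ℕ) (hc : c < (r - 1) * r ^ k)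
    (hlen : r ≤ a + 1 + d) :
    ∃ k' a' c' d', rMerge r (mseq r k a c d) = mseq r k' a' c' d' ∧
      c' < (r - 1) * r ^ k' ∧ a' + 1 + d' + (r - 1) = a + 1 + d ∧
      (a' + 1) * r ^ k' + d' * r ^ (k' + 1) + c' =
        (a + 1) * r ^ k + d * r ^ (k + 1) + c := by
  set x := r ^ k with hx
  have hx1 : 1 ≤ x := Nat.one_le_pow _ _ (by omega)
  have hy : r ^ (k + 1) = r * x := by rw [pow_succ, mul_comm]
  have hxy : x < r * x := by nlinarith
  by_cases har : r ≤ a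
  · -- merge r copies of x
    obtain ⟨e, rfl⟩ : ∃ e, a = r + e := ⟨a - r, by omega⟩
    refine ⟨k, e, c, d + 1, ?_, hc, by omega, ?_⟩
    · have hsplit : mseq r k (r + e) c d =
          List.replicate r x ++ (List.replicate e x ++ (x + c) ::
            List.replicate d (r ^ (k+1))) := by
        rw [mseq, ← hx, List.replicate_add, List.append_assoc]
      rw [rMerge, hsplit, List.take_left' (by simp), List.drop_left' (by simp)]
      have hsum : (List.replicate r x).sum = r * x := by
        simp [List.sum_replicate, smul_eq_mul]
      have hre : List.replicate e x ++ (x + c) :: List.replicate d (r^(k+1)) =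
          (List.replicate e x ++ [x + c]) ++ List.replicate d (r^(k+1)) := by
        rw [List.append_assoc]
        rfl
      rw [hsum, hre, oi_append ?_, oi_le (le_of_eq hy.symm)]
      · simp [mseq, hy, ← hx, ← List.replicate_succ]
      · intro z hz
        simp only [List.mem_append, List.mem_replicate, List.mem_singleton] at hz
        rcases hz with ⟨-, rfl⟩ | rfl
        · exact hxy
        · have h1 : (r - 1) * x + x = r * x := by
            have : r - 1 + 1 = r := by omega
            calc (r-1)*x + x = (r-1+1)*x := by ring
              _ = r * x := by rw [this]
          omega
    · rw [hy, ← hx]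
      ring
  · -- a < r : merge crosses the mixed element
    push_neg at har
    obtain ⟨u, hru⟩ : ∃ u, r = a + 1 + u := ⟨r - 1 - a, by omega⟩
    have hud : u ≤ d := by omega
    obtain ⟨D, rfl⟩ : ∃ D, d = u + D := ⟨d - u, by omega⟩
    set c' : ℕ := u * ((r - 1) * x) + c with hc'
    have hm : r - 1 = a + u := by omega
    have hsplit : mseq r k a c (u + D) =
        (List.replicate a x ++ (x + c) :: List.replicate u (r ^ (k+1))) ++
          List.replicate D (r ^ (k+1)) := by
      rw [mseq, ← hx, List.replicate_add]
      simp [List.append_assoc]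
    have hlenp : (List.replicate a x ++ (x + c) :: List.replicate u (r ^ (k+1))).length = r := by
      simp; omega
    have hsum : (List.replicate a x ++ (x + c) :: List.replicate u (r ^ (k+1))).sum
        = r ^ (k + 1) + c' := by
      simp [List.sum_replicate, hy, smul_eq_mul, hc', hm]
      rw [hru]; ring
    refine ⟨k + 1, D, c', 0, ?_, ?_, by omega, ?_⟩
    · rw [rMerge, hsplit, List.take_left' hlenp, List.drop_left' hlenp, hsum]
      rcases Nat.eq_zero_or_pos c' with h0 | hpos
      · rw [h0, Nat.add_zero, oi_le (le_refl _)]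
        rw [mseq]
        simp [h0, ← List.replicate_succ, List.replicate_succ']
      · rw [oi_gt (by omega)]
        rw [mseq]
        simp
    · have hur : u + 1 ≤ r := by omega
      calc c' = u * ((r-1) * x) + c := rfl
        _ < u * ((r-1)*x) + (r-1)*x := by omega
        _ = (u + 1) * ((r-1)*x) := by ring
        _ ≤ r * ((r-1)*x) := Nat.mul_le_mul_right _ hur
        _ = (r-1) * r^(k+1) := by rw [hy]; ring
    · rw [pow_succ, pow_succ, ← hx, hc', hm, hru]
      ring



lemma mseq_coe (r k a c d : ℕ) : (mseq r k a c d : Multiset ℕ) =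
    Multiset.replicate a (r ^ k) + {r ^ k + c} + Multiset.replicate d (r ^ (k + 1)) := by
  rw [mseq, add_assoc, Multiset.singleton_add, ← Multiset.coe_replicate,
    ← Multiset.coe_replicate, Multiset.cons_coe]
  exact (Multiset.coe_add _ _)

lemma iter (r : ℕ) (hr : 2 ≤ r) :
    ∀ j k a c d, c < (r - 1) * r ^ k → a + 1 + d = r + j * (r - 1) →
    ∃ k' a' c' d', (rMerge r)^[j] (mseq r k a c d) = mseq r k' a' c' d' ∧
      c' < (r - 1) * r ^ k' ∧ a' + 1 + d' = r ∧
      (a' + 1) * r ^ k' + d' * r ^ (k' + 1) + c' =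
        (a + 1) * r ^ k + d * r ^ (k + 1) + c := by
  intro j
  induction j with
  | zero =>
      intro k a c d hc hlen
      exact ⟨k, a, c, d, rfl, hc, by simpa using hlen, rfl⟩
  | succ j ih =>
      intro k a c d hc hlen
      obtain ⟨k1, a1, c1, d1, heq1, hc1, hlen1, hsum1⟩ :=
        step r hr k a c d hc (by rw [hlen]; exact Nat.le_add_right _ _)
      have hlen2 : a1 + 1 + d1 = r + j * (r - 1) := by
        have h3 : (j + 1) * (r - 1) = j * (r - 1) + (r - 1) := by ring
        rw [h3] at hlen
        generalize hT : j * (r - 1) = T at hlen ⊢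
        omega
      obtain ⟨k', a', c', d', heq2, hc', hlen', hsum2⟩ := ih k1 a1 c1 d1 hc1 hlen2
      refine ⟨k', a', c', d', ?_, hc', hlen', ?_⟩
      · rw [Function.iterate_succ_apply, heq1, heq2]
      · rw [hsum2, hsum1]

lemma pow_pred (r p : ℕ) (hp : 1 ≤ p) : r ^ p = r * r ^ (p - 1) := by
  conv_lhs => rw [show p = (p - 1) + 1 by omega]
  rw [pow_succ, mul_comm]

lemma bounds (r : ℕ) (hr : 2 ≤ r) (p s b : ℕ) (hp : 1 ≤ p) (hs1 : 1 ≤ s) (hs2 : s ≤ r)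
    (hb : b < (r - 1) * r ^ (p - 1)) :
    r ^ p ≤ s * r ^ (p - 1) + (r - s) * r ^ p + b ∧
    s * r ^ (p - 1) + (r - s) * r ^ p + b < r ^ (p + 1) := by
  set q := r ^ (p - 1) with hq
  have hq1 : 1 ≤ q := Nat.one_le_pow _ _ (by omega)
  have hrp : r ^ p = r * q := pow_pred r p hp
  have hrp1 : r ^ (p + 1) = r * (r * q) := by rw [pow_succ, hrp]; ring
  obtain ⟨s0, rfl⟩ : ∃ s0, s = s0 + 1 := ⟨s - 1, by omega⟩
  obtain ⟨u, hru⟩ : ∃ u, r = s0 + 1 + u := ⟨r - (s0 + 1), by omega⟩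
  have hrs : r - (s0 + 1) = u := by omega
  have hr1 : r - 1 = s0 + u := by omega
  rw [hr1] at hb
  rw [hrp, hrp1, hrs, hru]
  constructor
  · nlinarith [hq1, hb, Nat.zero_le (u * ((s0 + u) * q))]
  · have hst : (s0 + u) * q ≤ (s0 + 1) * ((s0 + u) * q) :=
      Nat.le_mul_of_pos_left _ (by omega)
    nlinarith [hq1, hb, hst]

set_option maxHeartbeats 1000000 in
lemma decomp_unique (r : ℕ) (hr : 2 ≤ r) {p s b p' s' b' : ℕ}
    (hp : 1 ≤ p) (hs1 : 1 ≤ s) (hs2 : s ≤ r) (hb : b < (r - 1) * r ^ (p - 1))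
    (hp' : 1 ≤ p') (hs1' : 1 ≤ s') (hs2' : s' ≤ r) (hb' : b' < (r - 1) * r ^ (p' - 1))
    (heq : s * r ^ (p - 1) + (r - s) * r ^ p + b
         = s' * r ^ (p' - 1) + (r - s') * r ^ p' + b') :
    p = p' ∧ s = s' ∧ b = b' := by
  obtain ⟨hB1, hB2⟩ := bounds r hr p s b hp hs1 hs2 hb
  obtain ⟨hB1', hB2'⟩ := bounds r hr p' s' b' hp' hs1' hs2' hb'
  have hpp : p = p' := by
    by_contra hne
    rcases Nat.lt_or_ge p p' with h | h
    · have hle : r ^ (p + 1) ≤ r ^ p' := Nat.pow_le_pow_right (by omega) (by omega)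
      linarith
    · have h2 : p' < p := by omega
      have hle : r ^ (p' + 1) ≤ r ^ p := Nat.pow_le_pow_right (by omega) (by omega)
      linarith
  subst hpp
  set q := r ^ (p - 1) with hq
  have hq1 : 1 ≤ q := Nat.one_le_pow _ _ (by omega)
  have hrp : r ^ p = r * q := pow_pred r p hp
  obtain ⟨u, hru⟩ : ∃ u, r = s + u := ⟨r - s, by omega⟩
  obtain ⟨u', hru'⟩ : ∃ u', r = s' + u' := ⟨r - s', by omega⟩
  have h1 : r - s = u := by omega
  have h2 : r - s' = u' := by omega
  rw [h1, h2, hrp] at heq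
  have hq1Z : (1:ℤ) ≤ (q:ℤ) := by exact_mod_cast hq1
  have hrZ : (2:ℤ) ≤ (r:ℤ) := by exact_mod_cast hr
  have heqZ : (s:ℤ) * q + u * ((r:ℤ) * q) + b = (s':ℤ) * q + u' * ((r:ℤ) * q) + b' := by
    exact_mod_cast heq
  have hruZ : (r:ℤ) = s + u := by exact_mod_cast hru
  have hruZ' : (r:ℤ) = s' + u' := by exact_mod_cast hru'
  have hbZ : (b:ℤ) < ((r:ℤ) - 1) * q := by
    have : (b:ℤ) < ((r - 1 : ℕ) : ℤ) * q := by exact_mod_cast hb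
    have h3 : ((r - 1 : ℕ) : ℤ) = (r:ℤ) - 1 := by
      have : 1 ≤ r := by omega
      push_cast [this]
      ring
    rwa [h3] at this
  have hb'Z : (b':ℤ) < ((r:ℤ) - 1) * q := by
    have : (b':ℤ) < ((r - 1 : ℕ) : ℤ) * q := by exact_mod_cast hb'
    have h3 : ((r - 1 : ℕ) : ℤ) = (r:ℤ) - 1 := by
      have : 1 ≤ r := by omega
      push_cast [this]
      ring
    rwa [h3] at this
  have hD : (b:ℤ) = b' + ((u':ℤ) - u) * (((r:ℤ) - 1) * q) := by
    linear_combination heqZ + (q:ℤ) * hruZ - (q:ℤ) * hruZ'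
  have hbnn : (0:ℤ) ≤ b := Int.ofNat_nonneg b
  have hb'nn : (0:ℤ) ≤ b' := Int.ofNat_nonneg b'
  have hM : (0:ℤ) ≤ ((r:ℤ) - 1) * q := by nlinarith
  have huu : u = u' := by
    rcases Nat.lt_trichotomy u u' with h | h | h
    · exfalso
      have h4 : (1:ℤ) ≤ (u':ℤ) - u := by
        have : (u:ℤ) < u' := by exact_mod_cast h
        linarith
      have h5 := mul_le_mul_of_nonneg_right h4 hM
      rw [one_mul] at h5
      linarith [hD, h5, hbZ, hb'nn]
    · exact h
    · exfalso
      have h4 : ((u':ℤ) - u) ≤ -1 := by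
        have : (u':ℤ) < u := by exact_mod_cast h
        linarith
      have h4' : (1:ℤ) ≤ (u:ℤ) - u' := by linarith
      have hD' : (b':ℤ) = b + ((u:ℤ) - u') * (((r:ℤ) - 1) * q) := by
        linear_combination -hD
      have h5 := mul_le_mul_of_nonneg_right h4' hM
      rw [one_mul] at h5
      linarith [hD', h5, hb'Z, hbnn]
  subst huu
  have hbb : b = b' := by
    have : (b:ℤ) = b' := by rw [hD]; ring
    exact_mod_cast this
  exact ⟨rfl, by omega, hbb⟩

end RMA

/-- Applying `w − 1` r-merges to the all-ones sequence of length
`n = w(r−1)+1` yields a length-`r` sequence whose multiset of elements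
consists of `s−1` copies of `r^(p−1)`, one element `r^(p−1)+b`, and `r−s`
copies of `r^p`, where `n = s·r^(p−1) + (r−s)·r^p + b` is the unique
decomposition with `p ≥ 1`, `1 ≤ s ≤ r`, `0 ≤ b < r^p − r^(p−1)`. -/
theorem rMerge_iterate_ones (r : ℕ) (hr : 2 ≤ r) (w : ℕ) (hw : 1 ≤ w)
    (n : ℕ) (hn : n = w * (r - 1) + 1)
    (p s b : ℕ) (hp : 1 ≤ p) (hs₁ : 1 ≤ s) (hs₂ : s ≤ r)
    (hb : b < r ^ p - r ^ (p - 1))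
    (hdecomp : n = s * r ^ (p - 1) + (r - s) * r ^ p + b) :
    ((rMerge r)^[w - 1] (List.replicate n 1)).length = r ∧
    (((rMerge r)^[w - 1] (List.replicate n 1) : Multiset ℕ) =
      Multiset.replicate (s - 1) (r ^ (p - 1)) + {r ^ (p - 1) + b} +
        Multiset.replicate (r - s) (r ^ p)) := by
  obtain ⟨v, rfl⟩ : ∃ v, w = v + 1 := ⟨w - 1, by omega⟩
  have hw1 : v + 1 - 1 = v := by omega
  rw [hw1]
  have hn2 : 2 ≤ n := by
    have h1 : 1 * (r - 1) ≤ (v + 1) * (r - 1) := Nat.mul_le_mul_right _ (by omega)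
    omega
  have h1 : n - 1 + 1 = n := by omega
  have hinit : List.replicate n 1 = RMA.mseq r 0 (n - 1) 0 0 := by
    rw [RMA.mseq]
    simp only [pow_zero, List.replicate_zero, Nat.add_zero]
    rw [← h1, List.replicate_succ']
    simp
  have hlen0 : (n - 1) + 1 + 0 = r + v * (r - 1) := by
    have h2 : (v + 1) * (r - 1) = v * (r - 1) + (r - 1) := by ring
    rw [h2] at hn
    generalize hT : v * (r - 1) = T at hn ⊢
    omega
  have hc0 : (0 : ℕ) < (r - 1) * r ^ 0 := by simp; omega
  obtain ⟨k', a', c', d', hEq, hc', hlen', hsum'⟩ :=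
    RMA.iter r hr v 0 (n - 1) 0 0 hc0 hlen0
  have hsum2 : (a' + 1) * r ^ k' + d' * r ^ (k' + 1) + c' = n := by
    rw [hsum']
    simp [h1]
  -- convert hb to the (r-1) * r^(p-1) form
  have hrp : r ^ p = r * r ^ (p - 1) := RMA.pow_pred r p hp
  have hbc : b < (r - 1) * r ^ (p - 1) := by
    have h3 : (r - 1) * r ^ (p - 1) = r * r ^ (p - 1) - 1 * r ^ (p - 1) := by
      rw [← Nat.sub_mul]
    rw [one_mul, ← hrp] at h3
    omega
  have hd' : d' = r - (a' + 1) := by omega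
  have heq2 : s * r ^ (p - 1) + (r - s) * r ^ p + b
      = (a' + 1) * r ^ (k' + 1 - 1) + (r - (a' + 1)) * r ^ (k' + 1) + c' := by
    rw [← hdecomp]
    rw [show k' + 1 - 1 = k' from rfl, ← hd']
    exact hsum2.symm
  obtain ⟨hpk, hsk, hbk⟩ := RMA.decomp_unique r hr hp hs₁ hs₂ hbc
    (by omega) (by omega) (by omega)
    (by rw [show k' + 1 - 1 = k' from rfl]; exact hc') heq2
  subst hpk
  subst hbk
  have hsa : s - 1 = a' := by omega
  have hds : r - s = d' := by omega
  constructor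
  · rw [hinit, hEq, RMA.mseq]
    simp only [List.length_append, List.length_replicate, List.length_cons]
    omega
  · rw [hinit, hEq, RMA.mseq_coe]
    rw [show k' + 1 - 1 = k' from rfl, hsa, hds]
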